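/- For every sample size n ≥ 1 and all data y_1 < … < y_n, the MDI prior for the GEV distribution, corresponding to π(ξ) = e^{−γ(1+ξ)} for ξ ∈ ℝ (γ the Euler–Mascheroni constant), yields an improper posterior: the GEV posterior normalizing constant K_n(e^{−γ(1+ξ)}; y) = +∞. -/

import Mathlib

open MeasureTheory Real Set
open scoped ENNReal Classical

/-- The GEV posterior integrand for data `y`, at parameters `(μ, σ, ξ)`:
`σ^{-(n+1)} ∏_i (1 + ξ(y_i - μ)/σ)^{-(1+1/ξ)} exp(-Σ_i (1 + ξ(y_i - μ)/σ)^{-1/ξ})`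
on the set where `1 + ξ(y_i - μ)/σ > 0` for all `i` (and `0` otherwise), with
the Gumbel interpretation
`σ^{-(n+1)} exp(-Σ_i (y_i - μ)/σ) exp(-Σ_i exp(-(y_i - μ)/σ))` when `ξ = 0`. -/
noncomputable def gevDens (n : ℕ) (y : Fin n → ℝ) (μ σ ξ : ℝ) : ℝ :=
  if ξ = 0 then
    σ ^ (-((n : ℝ) + 1)) * Real.exp (-∑ i, (y i - μ) / σ) *
      Real.exp (-∑ i, Real.exp (-((y i - μ) / σ)))
  else if ∀ i, 0 < 1 + ξ * (y i - μ) / σ then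
    σ ^ (-((n : ℝ) + 1)) * (∏ i, (1 + ξ * (y i - μ) / σ) ^ (-(1 + 1 / ξ))) *
      Real.exp (-∑ i, (1 + ξ * (y i - μ) / σ) ^ (-1 / ξ))
  else 0

/-- The GEV posterior normalizing constant `K_n(π; y)` arising from a
GEV(μ, σ, ξ) likelihood for `y_1, …, y_n` and the prior `π(μ,σ,ξ) ∝ π(ξ)/σ`. -/
noncomputable def gevK (n : ℕ) (y : Fin n → ℝ) (p : ℝ → ℝ) : ℝ≥0∞ :=
  ∫⁻ ξ : ℝ, ENNReal.ofReal (p ξ) *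
    ∫⁻ μ : ℝ, ∫⁻ σ in Set.Ioi (0 : ℝ), ENNReal.ofReal (gevDens n y μ σ ξ)

/-- For every sample size `n ≥ 1` and all data `y_1 < ⋯ < y_n`, the MDI prior
for the GEV distribution, with `π(ξ) = e^{-γ(1+ξ)}` (γ the Euler–Mascheroni
constant), yields an improper posterior: `K_n(e^{-γ(1+ξ)}; y) = ∞`. -/
theorem gev_MDI_improper (n : ℕ) (hn : 1 ≤ n) (y : Fin n → ℝ)
    (hy : StrictMono y) :
    gevK n y (fun ξ => Real.exp (-(Real.eulerMascheroniConstant * (1 + ξ)))) = ⊤ := by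
  set γ := Real.eulerMascheroniConstant with hγdef
  have hγ : 0 < γ := lt_trans (by norm_num) Real.one_half_lt_eulerMascheroniConstant
  set i0 : Fin n := ⟨0, hn⟩ with hi0
  set iN : Fin n := ⟨n - 1, by omega⟩ with hiN
  set D : ℝ := y iN - y i0 with hDdef
  have hD : 0 ≤ D := sub_nonneg.2 (hy.monotone (show i0 ≤ iN from Fin.le_iff_val_le_val.2 (Nat.zero_le _)))
  -- the uniform constant
  set C1 : ℝ := Real.exp (-γ) * (γ ^ (n+1) / (n+1).factorial * (4*(D+1)) ^ (-((n:ℝ)+1)))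
      * ((1/2 : ℝ) ^ n * Real.exp (-(2*(n:ℝ))) * (2*(D+1)) * (D+2)) with hC1def
  have hC1 : 0 < C1 := by
    have h1 : (0:ℝ) < (4*(D+1)) ^ (-((n:ℝ)+1)) := Real.rpow_pos_of_pos (by linarith) _
    have h2 : (0:ℝ) < γ ^ (n+1) / (n+1).factorial := by positivity
    positivity
  -- main pointwise claim
  have claim : ∀ ξ ∈ Iic (-1 : ℝ), ENNReal.ofReal C1 ≤
      ENNReal.ofReal (Real.exp (-(γ * (1 + ξ)))) *
        ∫⁻ μ : ℝ, ∫⁻ σ in Set.Ioi (0 : ℝ), ENNReal.ofReal (gevDens n y μ σ ξ) := by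
    intro ξ hξ
    rw [mem_Iic] at hξ
    set a : ℝ := -ξ with hadef
    have ha : 1 ≤ a := by simp [hadef]; linarith
    have ha0 : 0 < a := by linarith
    have hξ0 : ξ < 0 := by linarith
    have hξne : ξ ≠ 0 := ne_of_lt hξ0
    set S : ℝ := 2 * a * (D + 1) with hSdef
    have hS : 0 < S := by positivity
    have hSa : S / a = 2 * (D + 1) := by
      rw [hSdef]; field_simp
    set c : ℝ := (2*S) ^ (-((n:ℝ)+1)) * (1/2 : ℝ) ^ n * Real.exp (-(2*(n:ℝ))) with hcdef
    have hc : 0 < c := by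
      have : (0:ℝ) < (2*S) ^ (-((n:ℝ)+1)) := Real.rpow_pos_of_pos (by linarith) _
      positivity
    -- pointwise density bound
    have hpt : ∀ μ ∈ Ioc (y iN) (y i0 + S / a), ∀ σ ∈ Icc S (2*S),
        c ≤ gevDens n y μ σ ξ := by
      intro μ hμ σ hσ
      have hσ0 : 0 < σ := lt_of_lt_of_le hS hσ.1
      have hti_lb : ∀ i, 1 < 1 + ξ * (y i - μ) / σ := by
        intro i
        have hyi : y i ≤ y iN := hy.monotone (show i ≤ iN from Fin.le_iff_val_le_val.2 (show i.val ≤ n - 1 by have := i.isLt; omega))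
        have h1 : y i - μ < 0 := by have := hμ.1; linarith
        have h2 : 0 < ξ * (y i - μ) := mul_pos_of_neg_of_neg hξ0 h1
        have : 0 < ξ * (y i - μ) / σ := div_pos h2 hσ0
        linarith
      have hti_ub : ∀ i, 1 + ξ * (y i - μ) / σ ≤ 2 := by
        intro i
        have hyi : y i0 ≤ y i := hy.monotone (show i0 ≤ i from Fin.le_iff_val_le_val.2 (Nat.zero_le _))
        have h1 : ξ * (y i - μ) = a * (μ - y i) := by rw [hadef]; ring
        have h2 : a * (μ - y i) ≤ a * (μ - y i0) := by
          apply mul_le_mul_of_nonneg_left (by linarith) ha0.le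
        have h3 : μ - y i0 ≤ S / a := by have := hμ.2; linarith
        have h4 : a * (μ - y i0) ≤ S := by
          calc a * (μ - y i0) ≤ a * (S / a) := mul_le_mul_of_nonneg_left h3 ha0.le
            _ = S := mul_div_cancel₀ _ (ne_of_gt ha0)
        have h5 : ξ * (y i - μ) / σ ≤ 1 := by
          rw [div_le_one hσ0, h1]
          linarith [hσ.1]
        linarith
      rw [gevDens, if_neg hξne, if_pos (fun i => lt_trans one_pos (hti_lb i))]
      rw [hcdef]
      have hf1 : (2*S) ^ (-((n:ℝ)+1)) ≤ σ ^ (-((n:ℝ)+1)) :=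
        Real.rpow_le_rpow_of_nonpos hσ0 hσ.2 (by linarith)
      have hf2 : ((1:ℝ)/2) ^ n ≤ ∏ i, (1 + ξ * (y i - μ) / σ) ^ (-(1 + 1/ξ)) := by
        rw [show ((1:ℝ)/2) ^ n = ∏ _i : Fin n, ((1:ℝ)/2) by
          rw [Finset.prod_const, Finset.card_univ, Fintype.card_fin]]
        apply Finset.prod_le_prod (fun i _ => by norm_num)
        intro i _
        set t := 1 + ξ * (y i - μ) / σ with htdef
        have ht1 : 1 ≤ t := (hti_lb i).le
        have ht2 : t ≤ 2 := hti_ub i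
        have hinv : 1/ξ ≤ 0 := by
          apply div_nonpos_of_nonneg_of_nonpos (by norm_num) hξ0.le
        have h1 : t ^ (-1 : ℝ) ≤ t ^ (-(1 + 1/ξ)) :=
          Real.rpow_le_rpow_of_exponent_le ht1 (by linarith)
        have h2 : ((1:ℝ)/2) ≤ t ^ (-1 : ℝ) := by
          rw [Real.rpow_neg_one]
          rw [show ((1:ℝ)/2) = 2⁻¹ by norm_num]
          exact inv_anti₀ (by linarith) ht2
        linarith
      have hf3 : Real.exp (-(2*(n:ℝ))) ≤
          Real.exp (-∑ i, (1 + ξ * (y i - μ) / σ) ^ (-1/ξ)) := by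
        apply Real.exp_le_exp.2
        apply neg_le_neg
        calc ∑ i, (1 + ξ * (y i - μ) / σ) ^ (-1/ξ)
            ≤ ∑ _i : Fin n, (2:ℝ) := by
              apply Finset.sum_le_sum
              intro i _
              set t := 1 + ξ * (y i - μ) / σ with htdef
              have ht1 : 1 ≤ t := (hti_lb i).le
              have ht2 : t ≤ 2 := hti_ub i
              have hexp1 : (-1/ξ) ≤ 1 := by
                rw [show (-1/ξ : ℝ) = 1/a by rw [hadef]; ring]
                rw [div_le_one ha0]; exact ha
              calc t ^ (-1/ξ) ≤ t ^ (1:ℝ) :=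
                    Real.rpow_le_rpow_of_exponent_le ht1 hexp1
                _ = t := Real.rpow_one t
                _ ≤ 2 := ht2
          _ = 2*(n:ℝ) := by
              rw [Finset.sum_const, Finset.card_univ, Fintype.card_fin]
              push_cast; ring
      have hprodpos : (0:ℝ) < ∏ i, (1 + ξ * (y i - μ) / σ) ^ (-(1 + 1/ξ)) := by
        apply Finset.prod_pos
        intro i _
        exact Real.rpow_pos_of_pos (lt_trans one_pos (hti_lb i)) _
      have h2Spos : (0:ℝ) < (2*S) ^ (-((n:ℝ)+1)) := Real.rpow_pos_of_pos (by linarith) _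
      calc (2*S) ^ (-((n:ℝ)+1)) * (1/2:ℝ) ^ n * Real.exp (-(2*(n:ℝ)))
          ≤ σ ^ (-((n:ℝ)+1)) * (∏ i, (1 + ξ * (y i - μ) / σ) ^ (-(1 + 1/ξ))) *
            Real.exp (-(2*(n:ℝ))) := by
            apply mul_le_mul_of_nonneg_right _ (Real.exp_nonneg _)
            apply mul_le_mul hf1 hf2 (by positivity) (le_of_lt (Real.rpow_pos_of_pos hσ0 _))
        _ ≤ σ ^ (-((n:ℝ)+1)) * (∏ i, (1 + ξ * (y i - μ) / σ) ^ (-(1 + 1/ξ))) *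
            Real.exp (-∑ i, (1 + ξ * (y i - μ) / σ) ^ (-1/ξ)) := by
            apply mul_le_mul_of_nonneg_left hf3
            have : (0:ℝ) < σ ^ (-((n:ℝ)+1)) := Real.rpow_pos_of_pos hσ0 _
            positivity
    -- integrate over σ
    have hσint : ∀ μ ∈ Ioc (y iN) (y i0 + S / a),
        ENNReal.ofReal (c * S) ≤
          ∫⁻ σ in Set.Ioi (0:ℝ), ENNReal.ofReal (gevDens n y μ σ ξ) := by
      intro μ hμ
      calc ENNReal.ofReal (c * S)
          = ENNReal.ofReal c * volume (Icc S (2*S)) := by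
            rw [Real.volume_Icc, ← ENNReal.ofReal_mul hc.le]
            congr 1; ring
        _ = ∫⁻ _σ in Icc S (2*S), ENNReal.ofReal c := (setLIntegral_const _ _).symm
        _ ≤ ∫⁻ σ in Icc S (2*S), ENNReal.ofReal (gevDens n y μ σ ξ) :=
            setLIntegral_mono' measurableSet_Icc
              (fun σ hσ => ENNReal.ofReal_le_ofReal (hpt μ hμ σ hσ))
        _ ≤ ∫⁻ σ in Set.Ioi (0:ℝ), ENNReal.ofReal (gevDens n y μ σ ξ) :=
            lintegral_mono_set (fun σ hσ => lt_of_lt_of_le hS hσ.1)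
    -- integrate over μ
    have hμint : ENNReal.ofReal (c * S * (D + 2)) ≤
        ∫⁻ μ : ℝ, ∫⁻ σ in Set.Ioi (0:ℝ), ENNReal.ofReal (gevDens n y μ σ ξ) := by
      have hlen : y i0 + S / a - y iN = D + 2 := by rw [hSa, hDdef]; ring
      calc ENNReal.ofReal (c * S * (D + 2))
          = ENNReal.ofReal (c * S) * volume (Ioc (y iN) (y i0 + S / a)) := by
            rw [Real.volume_Ioc, hlen, ← ENNReal.ofReal_mul (by positivity)]
        _ = ∫⁻ _μ in Ioc (y iN) (y i0 + S / a), ENNReal.ofReal (c * S) :=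
            (setLIntegral_const _ _).symm
        _ ≤ ∫⁻ μ in Ioc (y iN) (y i0 + S / a),
              ∫⁻ σ in Set.Ioi (0:ℝ), ENNReal.ofReal (gevDens n y μ σ ξ) :=
            setLIntegral_mono' measurableSet_Ioc hσint
        _ ≤ ∫⁻ μ : ℝ, ∫⁻ σ in Set.Ioi (0:ℝ), ENNReal.ofReal (gevDens n y μ σ ξ) :=
            setLIntegral_le_lintegral _ _
    -- the real-number inequality
    have hreal : C1 ≤ Real.exp (-(γ * (1 + ξ))) * (c * S * (D + 2)) := by
      have hexpand : -(γ * (1 + ξ)) = γ * a + (-γ) := by rw [hadef]; ring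
      have hP : γ ^ (n+1) / (n+1).factorial * (4*(D+1)) ^ (-((n:ℝ)+1)) ≤
          Real.exp (γ * a) * (2*S) ^ (-((n:ℝ)+1)) := by
        have h2S : 2*S = a * (4*(D+1)) := by rw [hSdef]; ring
        rw [h2S, Real.mul_rpow ha0.le (by linarith)]
        have hexp : γ ^ (n+1) * a ^ (n+1) / (n+1).factorial ≤ Real.exp (γ * a) := by
          have := Real.pow_div_factorial_le_exp (γ * a) (mul_nonneg hγ.le ha0.le) (n+1)
          rwa [mul_pow] at this
        have hapow : a ^ (-((n:ℝ)+1)) = (a ^ (n+1))⁻¹ := by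
          rw [show -((n:ℝ)+1) = -((n+1 : ℕ) : ℝ) by norm_cast,
            Real.rpow_neg ha0.le, Real.rpow_natCast]
        have hsplit : γ ^ (n+1) / (n+1).factorial =
            (γ ^ (n+1) * a ^ (n+1) / (n+1).factorial) * (a ^ (n+1))⁻¹ := by
          field_simp
        have key : γ ^ (n+1) / (n+1).factorial ≤ Real.exp (γ * a) * a ^ (-((n:ℝ)+1)) := by
          rw [hapow, hsplit]
          apply mul_le_mul_of_nonneg_right hexp (by positivity)
        calc γ ^ (n+1) / (n+1).factorial * (4*(D+1)) ^ (-((n:ℝ)+1))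
            ≤ (Real.exp (γ * a) * a ^ (-((n:ℝ)+1))) * (4*(D+1)) ^ (-((n:ℝ)+1)) := by
              apply mul_le_mul_of_nonneg_right key
                (le_of_lt (Real.rpow_pos_of_pos (by linarith) _))
          _ = Real.exp (γ * a) * (a ^ (-((n:ℝ)+1)) * (4*(D+1)) ^ (-((n:ℝ)+1))) := by ring
      have hSge : 2*(D+1) ≤ S := by
        rw [hSdef]; nlinarith
      rw [hexpand, Real.exp_add]
      rw [hC1def, hcdef]
      have e1 : Real.exp (γ * a) * Real.exp (-γ) *
          ((2*S) ^ (-((n:ℝ)+1)) * (1/2:ℝ) ^ n * Real.exp (-(2*(n:ℝ))) * S * (D+2)) =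
          Real.exp (-γ) * (Real.exp (γ * a) * (2*S) ^ (-((n:ℝ)+1))) *
          ((1/2:ℝ) ^ n * Real.exp (-(2*(n:ℝ))) * S * (D+2)) := by ring
      calc Real.exp (-γ) * (γ ^ (n+1) / (n+1).factorial * (4*(D+1)) ^ (-((n:ℝ)+1)))
            * ((1/2:ℝ) ^ n * Real.exp (-(2*(n:ℝ))) * (2*(D+1)) * (D+2))
          ≤ Real.exp (-γ) * (Real.exp (γ * a) * (2*S) ^ (-((n:ℝ)+1)))
            * ((1/2:ℝ) ^ n * Real.exp (-(2*(n:ℝ))) * S * (D+2)) := by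
            have hq : (0:ℝ) ≤ γ ^ (n+1) / (n+1).factorial * (4*(D+1)) ^ (-((n:ℝ)+1)) := by
              have : (0:ℝ) < (4*(D+1)) ^ (-((n:ℝ)+1)) := Real.rpow_pos_of_pos (by linarith) _
              positivity
            apply mul_le_mul
            · exact mul_le_mul_of_nonneg_left hP (Real.exp_nonneg _)
            · apply mul_le_mul_of_nonneg_right _ (by linarith)
              apply mul_le_mul_of_nonneg_left hSge (by positivity)
            · positivity
            · have h1 : (0:ℝ) < (2*S) ^ (-((n:ℝ)+1)) := Real.rpow_pos_of_pos (by linarith) _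
              positivity
        _ = Real.exp (γ * a) * Real.exp (-γ) *
            ((2*S) ^ (-((n:ℝ)+1)) * (1/2:ℝ) ^ n * Real.exp (-(2*(n:ℝ))) * S * (D+2)) := by
            ring
    -- combine
    calc ENNReal.ofReal C1
        ≤ ENNReal.ofReal (Real.exp (-(γ * (1 + ξ))) * (c * S * (D + 2))) :=
          ENNReal.ofReal_le_ofReal hreal
      _ = ENNReal.ofReal (Real.exp (-(γ * (1 + ξ)))) * ENNReal.ofReal (c * S * (D + 2)) :=
          ENNReal.ofReal_mul (Real.exp_nonneg _)
      _ ≤ ENNReal.ofReal (Real.exp (-(γ * (1 + ξ)))) *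
            ∫⁻ μ : ℝ, ∫⁻ σ in Set.Ioi (0:ℝ), ENNReal.ofReal (gevDens n y μ σ ξ) :=
          mul_le_mul_right hμint _
  -- conclude
  rw [gevK]
  rw [eq_top_iff]
  calc (⊤ : ℝ≥0∞)
      = ENNReal.ofReal C1 * volume (Iic (-1:ℝ)) := by
        rw [Real.volume_Iic, ENNReal.mul_top (by simp [ENNReal.ofReal_pos.2 hC1, ne_of_gt])]
    _ = ∫⁻ _ξ in Iic (-1:ℝ), ENNReal.ofReal C1 := (setLIntegral_const _ _).symm
    _ ≤ ∫⁻ ξ in Iic (-1:ℝ), ENNReal.ofReal (Real.exp (-(γ * (1 + ξ)))) *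
          ∫⁻ μ : ℝ, ∫⁻ σ in Set.Ioi (0:ℝ), ENNReal.ofReal (gevDens n y μ σ ξ) :=
        setLIntegral_mono' measurableSet_Iic claim
    _ ≤ ∫⁻ ξ : ℝ, ENNReal.ofReal (Real.exp (-(γ * (1 + ξ)))) *
          ∫⁻ μ : ℝ, ∫⁻ σ in Set.Ioi (0:ℝ), ENNReal.ofReal (gevDens n y μ σ ξ) :=
        setLIntegral_le_lintegral _ _
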